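/- Let 𝒞 be a hereditary class of finite simple graphs (closed under induced subgraphs and under isomorphism) whose vertex-cover number is unbounded, i.e., for every integer t there is a graph in 𝒞 with vertex-cover number greater than t. Then at least one of the following holds: (1) for every positive integer n, the matching graph with n edges belongs to 𝒞; (2) for every positive integer n, the complete graph K_n belongs to 𝒞; (3) for every positive integer n, the complete bipartite graph K_{n,n} belongs to 𝒞. -/

import Mathlib

open SimpleGraph

/-- The matching graph with `n` edges: the disjoint union of `n` copies of `K₂`. -/
def matchingGraph (n : ℕ) : SimpleGraph (Fin n × Fin 2) where
  Adj x y := x.1 = y.1 ∧ x.2 ≠ y.2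
  symm := ⟨fun x y h => ⟨h.1.symm, h.2.symm⟩⟩
  loopless := ⟨fun x h => h.2 rfl⟩

lemma boolify_eq {P : Prop} [Decidable P] {b : Bool} (h : (if P then true else false) = b) :
    P ↔ b = true := by
  by_cases hp : P
  · rw [if_pos hp] at h; simp [hp, ← h]
  · rw [if_neg hp] at h; simp [hp, ← h]


lemma preRamsey {α : Type} [Fintype α] [DecidableEq α] (hc : 2 ≤ Fintype.card α)
    (f : ℕ → ℕ → α) :
    ∀ (m : ℕ) (S : Finset ℕ), Fintype.card α ^ m ≤ S.card →
    ∃ (T : Finset ℕ) (cl : ℕ → α), T ⊆ S ∧ T.card = m ∧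
      ∀ x ∈ T, ∀ y ∈ T, x < y → f x y = cl x := by
  have hne : Nonempty α := Fintype.card_pos_iff.mp (by omega)
  intro m
  induction m with
  | zero =>
    intro S _
    exact ⟨∅, fun _ => Classical.arbitrary α, Finset.empty_subset _, Finset.card_empty,
      by simp⟩
  | succ m ih =>
    intro S hS
    have hc0 : 0 < Fintype.card α := by omega
    have hSne : S.Nonempty := Finset.card_pos.mp (lt_of_lt_of_le (pow_pos hc0 (m+1)) hS)
    set v := S.min' hSne with hv
    have hvS : v ∈ S := S.min'_mem hSne
    have hkey : ∃ d : α, Fintype.card α ^ m ≤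
        ((S.erase v).filter (fun y => f v y = d)).card := by
      by_contra h
      push_neg at h
      have hsum : (S.erase v).card =
          ∑ d : α, ((S.erase v).filter (fun y => f v y = d)).card :=
        Finset.card_eq_sum_card_fiberwise (fun x _ => Finset.mem_univ (f v x))
      have hbd : ∑ d : α, ((S.erase v).filter (fun y => f v y = d)).card ≤
          Fintype.card α * (Fintype.card α ^ m - 1) := by
        have := Finset.sum_le_card_nsmul Finset.univ
          (fun d => ((S.erase v).filter (fun y => f v y = d)).card)
          (Fintype.card α ^ m - 1) (fun d _ => Nat.le_sub_one_of_lt (h d))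
        simpa [Finset.card_univ, smul_eq_mul] using this
      have hEc : (S.erase v).card = S.card - 1 := Finset.card_erase_of_mem hvS
      have hp1 : 1 ≤ Fintype.card α ^ m := Nat.one_le_pow _ _ hc0
      have hmul : Fintype.card α * (Fintype.card α ^ m - 1) + Fintype.card α
          = Fintype.card α ^ (m+1) := by
        have h1 : Fintype.card α * (Fintype.card α ^ m - 1 + 1)
            = Fintype.card α ^ (m+1) := by
          rw [Nat.sub_add_cancel hp1, pow_succ, mul_comm]
        rw [Nat.mul_add, mul_one] at h1
        exact h1
      omega
    obtain ⟨d, hd⟩ := hkey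
    obtain ⟨T', cl', hT'sub, hT'card, hT'p⟩ := ih _ hd
    have hT'S : T' ⊆ S.erase v := hT'sub.trans (Finset.filter_subset _ _)
    have hvT' : v ∉ T' := fun h => (Finset.mem_erase.mp (hT'S h)).1 rfl
    refine ⟨insert v T', fun x => if x = v then d else cl' x, ?_, ?_, ?_⟩
    · exact Finset.insert_subset hvS (hT'S.trans (Finset.erase_subset _ _))
    · rw [Finset.card_insert_of_notMem hvT', hT'card]
    · intro x hx y hy hxy
      rcases Finset.mem_insert.mp hx with rfl | hx'
      · rcases Finset.mem_insert.mp hy with rfl | hy'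
        · omega
        · have hfd : f v y = d := (Finset.mem_filter.mp (hT'sub hy')).2
          show f v y = if v = v then d else cl' v
          rw [if_pos rfl]; exact hfd
      · have hxv : x ≠ v := fun h => (Finset.mem_erase.mp (hT'S hx')).1 h
        rcases Finset.mem_insert.mp hy with rfl | hy'
        · exact absurd (S.min'_le x (Finset.mem_of_mem_erase (hT'S hx'))) (by omega)
        · show f x y = if x = v then d else cl' x
          rw [if_neg hxv]
          exact hT'p x hx' y hy' hxy

lemma myRamsey {α : Type} [Fintype α] [DecidableEq α] (hc : 2 ≤ Fintype.card α)
    (f : ℕ → ℕ → α) (s : ℕ) (S : Finset ℕ)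
    (hS : Fintype.card α ^ (Fintype.card α * s) ≤ S.card) :
    ∃ (U : Finset ℕ) (d : α), U ⊆ S ∧ s ≤ U.card ∧
      ∀ x ∈ U, ∀ y ∈ U, x < y → f x y = d := by
  obtain ⟨T, cl, hTS, hTcard, hTp⟩ := preRamsey hc f _ S hS
  have hkey : ∃ d : α, s ≤ (T.filter (fun x => cl x = d)).card := by
    by_contra h
    push_neg at h
    have hsum : T.card = ∑ d : α, (T.filter (fun x => cl x = d)).card :=
      Finset.card_eq_sum_card_fiberwise (fun x _ => Finset.mem_univ (cl x))
    have hbd : ∑ d : α, (T.filter (fun x => cl x = d)).card ≤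
        Fintype.card α * (s - 1) := by
      have := Finset.sum_le_card_nsmul Finset.univ
        (fun d => (T.filter (fun x => cl x = d)).card) (s - 1)
        (fun d _ => Nat.le_sub_one_of_lt (h d))
      simpa [Finset.card_univ, smul_eq_mul] using this
    -- T.card = card α * s
    have hcases : s = 0 ∨ 1 ≤ s := by omega
    rcases hcases with rfl | hs1
    · have hne : Nonempty α := Fintype.card_pos_iff.mp (by omega)
      obtain ⟨d⟩ := hne
      exact absurd (h d) (by omega)
    · have hmul : Fintype.card α * (s-1) + Fintype.card α = Fintype.card α * s := by
        have h1 : Fintype.card α * (s - 1 + 1) = Fintype.card α * s := by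
          rw [Nat.sub_add_cancel hs1]
        rw [Nat.mul_add, mul_one] at h1
        exact h1
      omega
  obtain ⟨d, hd⟩ := hkey
  refine ⟨T.filter (fun x => cl x = d), d, (Finset.filter_subset _ _).trans hTS, hd, ?_⟩
  intro x hx y hy hxy
  obtain ⟨hxT, hxd⟩ := Finset.mem_filter.mp hx
  obtain ⟨hyT, _⟩ := Finset.mem_filter.mp hy
  rw [hTp x hxT y hyT hxy, hxd]


lemma exists_matching {N : ℕ} (G : SimpleGraph (Fin N)) (k : ℕ)
    (h : ∀ X : Finset (Fin N), (∀ x y : Fin N, G.Adj x y → x ∈ X ∨ y ∈ X) →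
      2 * k < X.card) :
    ∃ M : Finset (Fin N × Fin N), M.card = k ∧ (∀ p ∈ M, G.Adj p.1 p.2) ∧
      ∀ p ∈ M, ∀ q ∈ M, p ≠ q →
        p.1 ≠ q.1 ∧ p.1 ≠ q.2 ∧ p.2 ≠ q.1 ∧ p.2 ≠ q.2 := by
  classical
  let isM : Finset (Fin N × Fin N) → Prop := fun M =>
    (∀ p ∈ M, G.Adj p.1 p.2) ∧
    ∀ p ∈ M, ∀ q ∈ M, p ≠ q → p.1 ≠ q.1 ∧ p.1 ≠ q.2 ∧ p.2 ≠ q.1 ∧ p.2 ≠ q.2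
  have hne : ((Finset.univ : Finset (Finset (Fin N × Fin N))).filter isM).Nonempty := by
    refine ⟨∅, Finset.mem_filter.mpr ⟨Finset.mem_univ _, ?_, ?_⟩⟩ <;> simp
  obtain ⟨M, hMmem, hMmax⟩ := Finset.exists_max_image _ Finset.card hne
  obtain ⟨hMadj, hMdisj⟩ := (Finset.mem_filter.mp hMmem).2
  -- M's vertices form a cover
  set X : Finset (Fin N) := M.image Prod.fst ∪ M.image Prod.snd with hX
  have hcover : ∀ x y : Fin N, G.Adj x y → x ∈ X ∨ y ∈ X := by
    intro x y hxy
    by_contra hcon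
    push_neg at hcon
    obtain ⟨hx, hy⟩ := hcon
    have hx1 : ∀ p ∈ M, x ≠ p.1 := by
      intro p hp he
      exact hx (Finset.mem_union_left _ (Finset.mem_image.mpr ⟨p, hp, he.symm⟩))
    have hx2 : ∀ p ∈ M, x ≠ p.2 := by
      intro p hp he
      exact hx (Finset.mem_union_right _ (Finset.mem_image.mpr ⟨p, hp, he.symm⟩))
    have hy1 : ∀ p ∈ M, y ≠ p.1 := by
      intro p hp he
      exact hy (Finset.mem_union_left _ (Finset.mem_image.mpr ⟨p, hp, he.symm⟩))
    have hy2 : ∀ p ∈ M, y ≠ p.2 := by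
      intro p hp he
      exact hy (Finset.mem_union_right _ (Finset.mem_image.mpr ⟨p, hp, he.symm⟩))
    have hnotmem : (x, y) ∉ M := fun hm => hx1 _ hm rfl
    have hM' : isM (insert (x, y) M) := by
      constructor
      · intro p hp
        rcases Finset.mem_insert.mp hp with rfl | hp'
        · exact hxy
        · exact hMadj p hp'
      · intro p hp q hq hpq
        rcases Finset.mem_insert.mp hp with rfl | hp' <;>
          rcases Finset.mem_insert.mp hq with h' | hq'
        · exact absurd h'.symm hpq
        · exact ⟨hx1 _ hq', hx2 _ hq', hy1 _ hq', hy2 _ hq'⟩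
        · subst h'
          refine ⟨fun he => hx1 _ hp' he.symm, fun he => hy1 _ hp' he.symm,
            fun he => hx2 _ hp' he.symm, fun he => hy2 _ hp' he.symm⟩
        · exact hMdisj p hp' q hq' hpq
    have hle := hMmax (insert (x, y) M)
      (Finset.mem_filter.mpr ⟨Finset.mem_univ _, hM'⟩)
    rw [Finset.card_insert_of_notMem hnotmem] at hle
    omega
  have hXcard : X.card ≤ 2 * M.card := by
    calc X.card ≤ (M.image Prod.fst).card + (M.image Prod.snd).card :=
          Finset.card_union_le _ _
      _ ≤ M.card + M.card := Nat.add_le_add (Finset.card_image_le) (Finset.card_image_le)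
      _ = 2 * M.card := by ring
  have hk : k ≤ M.card := by have := h X hcover; omega
  obtain ⟨M', hM'sub, hM'card⟩ := Finset.exists_subset_card_eq hk
  exact ⟨M', hM'card, fun p hp => hMadj p (hM'sub hp),
    fun p hp q hq hpq => hMdisj p (hM'sub hp) q (hM'sub hq) hpq⟩

/-- Let `C` be a hereditary class of finite simple graphs (encoded as a predicate on
graphs on `Fin n`, closed under isomorphic copies of induced subgraphs) whose
vertex-cover number is unbounded. Then `C` contains all matching graphs, or all
complete graphs, or all complete balanced bipartite graphs. -/
theorem stmt18 (C : ∀ n : ℕ, SimpleGraph (Fin n) → Prop)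
    (hher : ∀ {n m : ℕ} (G : SimpleGraph (Fin n)) (G' : SimpleGraph (Fin m)),
      C n G → (∃ f : Fin m ↪ Fin n, ∀ x y : Fin m, G'.Adj x y ↔ G.Adj (f x) (f y)) →
      C m G')
    (hunb : ∀ t : ℕ, ∃ (n : ℕ) (G : SimpleGraph (Fin n)), C n G ∧
      ∀ X : Finset (Fin n), (∀ x y : Fin n, G.Adj x y → x ∈ X ∨ y ∈ X) → t < X.card) :
    (∀ n : ℕ, 0 < n → ∃ G : SimpleGraph (Fin (2 * n)), C (2 * n) G ∧
        Nonempty (G ≃g matchingGraph n)) ∨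
    (∀ n : ℕ, 0 < n → C n ⊤) ∨
    (∀ n : ℕ, 0 < n → ∃ G : SimpleGraph (Fin (2 * n)), C (2 * n) G ∧
        Nonempty (G ≃g completeBipartiteGraph (Fin n) (Fin n))) := by
  classical
  by_contra hcon
  push_neg at hcon
  obtain ⟨h1, h2, h3⟩ := hcon
  obtain ⟨n1, hn1, hm1⟩ := h1
  obtain ⟨n2, hn2, hm2⟩ := h2
  obtain ⟨n3, hn3, hm3⟩ := h3
  set n : ℕ := max n1 (max n2 n3) with hndef
  have h1n : n1 ≤ n := le_max_left _ _
  have h2n : n2 ≤ n := le_trans (le_max_left _ _) (le_max_right _ _)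
  have h3n : n3 ≤ n := le_trans (le_max_right _ _) (le_max_right _ _)
  set s : ℕ := 2 * n with hsdef
  set k : ℕ := 16 ^ (16 * s) with hkdef
  have hk : 0 < k := pow_pos (by norm_num) _
  obtain ⟨N, G, hG, hvc⟩ := hunb (2 * k)
  obtain ⟨M, hMcard, hMadj, hMdisj⟩ := exists_matching G k hvc
  set g : {x // x ∈ M} ≃ Fin k := Finset.equivFinOfCardEq hMcard with hgdef
  set P : ℕ → Fin N × Fin N := fun i => (g.symm ⟨i % k, Nat.mod_lt i hk⟩ : Fin N × Fin N)
    with hPdef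
  set A : ℕ → Fin N := fun i => (P i).1 with hAdef
  set B : ℕ → Fin N := fun i => (P i).2 with hBdef
  have hPmem : ∀ i : ℕ, P i ∈ M := fun i => (g.symm ⟨i % k, Nat.mod_lt i hk⟩).2
  have hAB : ∀ i : ℕ, G.Adj (A i) (B i) := fun i => hMadj _ (hPmem i)
  have hpair_ne : ∀ i j : ℕ, i < k → j < k → i ≠ j →
      A i ≠ A j ∧ A i ≠ B j ∧ B i ≠ A j ∧ B i ≠ B j := by
    intro i j hi hj hij
    have hne : P i ≠ P j := by
      intro he
      have h2 : (⟨i % k, Nat.mod_lt i hk⟩ : Fin k) = ⟨j % k, Nat.mod_lt j hk⟩ :=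
        g.symm.injective (Subtype.ext he)
      have h3 : i % k = j % k := congrArg Fin.val h2
      rw [Nat.mod_eq_of_lt hi, Nat.mod_eq_of_lt hj] at h3
      exact hij h3
    exact hMdisj _ (hPmem i) _ (hPmem j) hne
  set χ : ℕ → ℕ → Bool × Bool × Bool × Bool := fun i j =>
    (if G.Adj (A i) (A j) then true else false,
     if G.Adj (A i) (B j) then true else false,
     if G.Adj (B i) (A j) then true else false,
     if G.Adj (B i) (B j) then true else false) with hχdef
  have hcard16 : Fintype.card (Bool × Bool × Bool × Bool) = 16 := by simp
  obtain ⟨U, d, hUsub, hUcard, hUmono⟩ := myRamsey (α := Bool × Bool × Bool × Bool)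
    (by rw [hcard16]; norm_num) χ s (Finset.range k)
    (by rw [hcard16, Finset.card_range])
  obtain ⟨U', hU'sub, hU'card⟩ := Finset.exists_subset_card_eq hUcard
  set u : Fin s → ℕ := fun i => (U'.orderIsoOfFin hU'card i : ℕ) with hudef
  have humem : ∀ i, u i ∈ U' := fun i => (U'.orderIsoOfFin hU'card i).2
  have humono : StrictMono u := fun i j hij =>
    Subtype.coe_lt_coe.mpr ((U'.orderIsoOfFin hU'card).lt_iff_lt.mpr hij)
  have hult : ∀ i, u i < k := fun i => Finset.mem_range.mp (hUsub (hU'sub (humem i)))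
  have hcol : ∀ i j : Fin s, i < j → χ (u i) (u j) = d :=
    fun i j hij => hUmono _ (hU'sub (humem i)) _ (hU'sub (humem j)) (humono hij)
  set vA : Fin s → Fin N := fun i => A (u i) with hvAdef
  set vB : Fin s → Fin N := fun i => B (u i) with hvBdef
  have hvAB : ∀ i : Fin s, G.Adj (vA i) (vB i) := fun i => hAB (u i)
  have hvne : ∀ i j : Fin s, i ≠ j →
      vA i ≠ vA j ∧ vA i ≠ vB j ∧ vB i ≠ vA j ∧ vB i ≠ vB j :=
    fun i j hij => hpair_ne _ _ (hult i) (hult j) (fun h => hij (humono.injective h))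
  -- Components of the constant color
  have hPaa : ∀ i j : Fin s, i < j → (G.Adj (vA i) (vA j) ↔ d.1 = true) := by
    intro i j hij
    exact boolify_eq (congrArg (fun z => z.1) (hcol i j hij))
  have hPab : ∀ i j : Fin s, i < j → (G.Adj (vA i) (vB j) ↔ d.2.1 = true) := by
    intro i j hij
    exact boolify_eq (congrArg (fun z => z.2.1) (hcol i j hij))
  have hPba : ∀ i j : Fin s, i < j → (G.Adj (vB i) (vA j) ↔ d.2.2.1 = true) := by
    intro i j hij
    exact boolify_eq (congrArg (fun z => z.2.2.1) (hcol i j hij))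
  have hPbb : ∀ i j : Fin s, i < j → (G.Adj (vB i) (vB j) ↔ d.2.2.2 = true) := by
    intro i j hij
    exact boolify_eq (congrArg (fun z => z.2.2.2) (hcol i j hij))
  -- helper: a clique of size s yields a contradiction
  have hcliqueCase : ∀ vv : Fin s → Fin N,
      (∀ i j : Fin s, i ≠ j → vv i ≠ vv j) →
      (∀ i j : Fin s, i < j → G.Adj (vv i) (vv j)) → False := by
    intro vv hinj hadj
    apply hm2
    have hn2s : n2 ≤ s := by omega
    refine hher G ⊤ hG ⟨⟨fun x => vv (Fin.castLE hn2s x), fun x y hxy => ?_⟩, fun x y => ?_⟩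
    · by_contra hne
      exact hinj _ _
        (fun h => hne (Fin.ext (by simpa using congrArg Fin.val h))) hxy
    · rw [SimpleGraph.top_adj]
      constructor
      · intro hne
        have hne' : Fin.castLE hn2s x ≠ Fin.castLE hn2s y := by
          intro h; exact hne (Fin.ext (by simpa using congrArg Fin.val h))
        rcases lt_or_gt_of_ne hne' with h | h
        · exact hadj _ _ h
        · exact (hadj _ _ h).symm
      · intro hadj' heq
        rw [heq] at hadj'
        exact G.loopless.irrefl _ hadj'
  -- helper : complete bipartite of size s/2 on both sides yields a contradiction
  have hbipCase : ∀ vL vR : Fin s → Fin N,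
      (∀ i j : Fin s, i ≠ j → vL i ≠ vL j ∧ vL i ≠ vR j ∧ vR i ≠ vL j ∧ vR i ≠ vR j) →
      (∀ i j : Fin s, i < j →
        ¬ G.Adj (vL i) (vL j) ∧ G.Adj (vL i) (vR j) ∧ ¬ G.Adj (vR i) (vR j)) →
      False := by
    intro vL vR hdisj hpat
    have hnoLL : ∀ i j : Fin s, ¬ G.Adj (vL i) (vL j) := by
      intro i j hadj
      rcases lt_trichotomy i j with h | h | h
      · exact (hpat i j h).1 hadj
      · rw [h] at hadj; exact G.loopless.irrefl _ hadj
      · exact (hpat j i h).1 hadj.symm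
    have hnoRR : ∀ i j : Fin s, ¬ G.Adj (vR i) (vR j) := by
      intro i j hadj
      rcases lt_trichotomy i j with h | h | h
      · exact (hpat i j h).2.2 hadj
      · rw [h] at hadj; exact G.loopless.irrefl _ hadj
      · exact (hpat j i h).2.2 hadj.symm
    set idxL : Fin n3 → Fin s := fun i => ⟨(i : ℕ), by omega⟩ with hidxL
    set idxR : Fin n3 → Fin s := fun j => ⟨n3 + (j : ℕ), by omega⟩ with hidxR
    have hLR : ∀ (i j : Fin n3), idxL i < idxR j := by
      intro i j; rw [Fin.lt_def]; simp [hidxL, hidxR]; omega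
    have hLL : ∀ (i j : Fin n3), i ≠ j → idxL i ≠ idxL j := by
      intro i j hij h
      exact hij (Fin.ext (by simpa [hidxL] using congrArg Fin.val h))
    have hRR : ∀ (i j : Fin n3), i ≠ j → idxR i ≠ idxR j := by
      intro i j hij h
      apply hij
      have := congrArg Fin.val h
      simp only [hidxR] at this
      exact Fin.ext (by omega)
    have hLRne : ∀ (i j : Fin n3), idxL i ≠ idxR j := fun i j => Fin.ne_of_lt (hLR i j)
    set emb : Fin n3 ⊕ Fin n3 → Fin N :=
      Sum.elim (fun i => vL (idxL i)) (fun j => vR (idxR j)) with hemb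
    set ι : Fin (2 * n3) ≃ (Fin n3 ⊕ Fin n3) :=
      (finCongr (two_mul n3)).trans finSumFinEquiv.symm with hι
    set G' : SimpleGraph (Fin (2 * n3)) :=
      (completeBipartiteGraph (Fin n3) (Fin n3)).comap ι with hG'
    have hkey : ∀ x y : Fin n3 ⊕ Fin n3,
        (completeBipartiteGraph (Fin n3) (Fin n3)).Adj x y ↔ G.Adj (emb x) (emb y) := by
      rintro (i | i) (j | j)
      · simp only [completeBipartiteGraph, hemb, Sum.elim_inl]
        constructor
        · rintro (⟨-, h⟩ | ⟨h, -⟩) <;> simp at h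
        · intro h; exact absurd h (hnoLL _ _)
      · simp only [hemb, Sum.elim_inl, Sum.elim_inr]
        constructor
        · intro _; exact (hpat _ _ (hLR i j)).2.1
        · intro _; simp [completeBipartiteGraph]
      · simp only [hemb, Sum.elim_inl, Sum.elim_inr]
        constructor
        · intro _; exact (hpat _ _ (hLR j i)).2.1.symm
        · intro _; simp [completeBipartiteGraph]
      · simp only [completeBipartiteGraph, hemb, Sum.elim_inr]
        constructor
        · rintro (⟨h, -⟩ | ⟨-, h⟩) <;> simp at h
        · intro h; exact absurd h (hnoRR _ _)
    have hembinj : Function.Injective emb := by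
      rintro (i | i) (j | j) h <;> simp only [hemb, Sum.elim_inl, Sum.elim_inr] at h
      · by_contra hne
        have hne' : idxL i ≠ idxL j := hLL i j (fun he => hne (by rw [he]))
        exact (hdisj _ _ hne').1 h
      · exact absurd h (hdisj _ _ (hLRne i j)).2.1
      · exact absurd h.symm (hdisj _ _ (hLRne j i)).2.1
      · by_contra hne
        have hne' : idxR i ≠ idxR j := hRR i j (fun he => hne (by rw [he]))
        exact (hdisj _ _ hne').2.2.2 h
    have hCG' : C (2 * n3) G' := by
      refine hher G G' hG ⟨⟨fun x => emb (ι x), fun x y hxy => ι.injective (hembinj hxy)⟩,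
        fun x y => ?_⟩
      exact hkey (ι x) (ι y)
    exact (hm3 G' hCG').false ⟨ι, fun {a b} => Iff.rfl⟩
  -- Now case on the color d
  by_cases hp : d.1 = true
  · exact hcliqueCase vA (fun i j hij => (hvne i j hij).1)
      (fun i j hij => (hPaa i j hij).mpr hp)
  · by_cases ht : d.2.2.2 = true
    · exact hcliqueCase vB (fun i j hij => (hvne i j hij).2.2.2)
        (fun i j hij => (hPbb i j hij).mpr ht)
    · by_cases hq : d.2.1 = true
      · -- bipartite, A side left
        refine hbipCase vA vB (fun i j hij => hvne i j hij) ?_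
        intro i j hij
        exact ⟨fun h => hp ((hPaa i j hij).mp h), (hPab i j hij).mpr hq,
          fun h => ht ((hPbb i j hij).mp h)⟩
      · by_cases hr : d.2.2.1 = true
        · -- bipartite, B side left
          refine hbipCase vB vA
            (fun i j hij => ?_) ?_
          · obtain ⟨a1, a2, a3, a4⟩ := hvne i j hij
            exact ⟨a4, a3, a2, a1⟩
          · intro i j hij
            exact ⟨fun h => ht ((hPbb i j hij).mp h), (hPba i j hij).mpr hr,
              fun h => hp ((hPaa i j hij).mp h)⟩
        · -- matching case
          have hnoAA : ∀ i j : Fin s, ¬ G.Adj (vA i) (vA j) := by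
            intro i j hadj
            rcases lt_trichotomy i j with h | h | h
            · exact hp ((hPaa i j h).mp hadj)
            · rw [h] at hadj; exact G.loopless.irrefl _ hadj
            · exact hp ((hPaa j i h).mp hadj.symm)
          have hnoBB : ∀ i j : Fin s, ¬ G.Adj (vB i) (vB j) := by
            intro i j hadj
            rcases lt_trichotomy i j with h | h | h
            · exact ht ((hPbb i j h).mp hadj)
            · rw [h] at hadj; exact G.loopless.irrefl _ hadj
            · exact ht ((hPbb j i h).mp hadj.symm)
          have hnoAB : ∀ i j : Fin s, i ≠ j → ¬ G.Adj (vA i) (vB j) := by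
            intro i j hij hadj
            rcases lt_trichotomy i j with h | h | h
            · exact hq ((hPab i j h).mp hadj)
            · exact hij h
            · exact hr ((hPba j i h).mp hadj.symm)
          have hn1s : n1 ≤ s := by omega
          set idx : Fin n1 → Fin s := fun i => ⟨(i : ℕ), by omega⟩ with hidx
          have hidxinj : ∀ i j : Fin n1, i ≠ j → idx i ≠ idx j := by
            intro i j hij h
            exact hij (Fin.ext (by simpa [hidx] using congrArg Fin.val h))
          set emb : Fin n1 × Fin 2 → Fin N :=
            fun p => if p.2 = 0 then vA (idx p.1) else vB (idx p.1) with hemb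
          set ι : Fin (2 * n1) ≃ (Fin n1 × Fin 2) :=
            (finCongr (Nat.mul_comm 2 n1)).trans finProdFinEquiv.symm with hι
          set G' : SimpleGraph (Fin (2 * n1)) := (matchingGraph n1).comap ι with hG'
          have hkey : ∀ x y : Fin n1 × Fin 2,
              (matchingGraph n1).Adj x y ↔ G.Adj (emb x) (emb y) := by
            rintro ⟨i, a⟩ ⟨j, b⟩
            show (i = j ∧ a ≠ b) ↔ _
            have ha : a = 0 ∨ a = 1 := by omega
            have hb : b = 0 ∨ b = 1 := by omega
            rcases ha with rfl | rfl <;> rcases hb with rfl | rfl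
            · constructor
              · rintro ⟨-, h⟩; exact absurd rfl h
              · intro h
                exact absurd (show G.Adj (vA (idx i)) (vA (idx j)) by
                  simpa [hemb] using h) (hnoAA _ _)
            · constructor
              · rintro ⟨rfl, -⟩
                simpa [hemb] using hvAB (idx i)
              · intro h
                refine ⟨?_, by decide⟩
                by_contra hij
                exact hnoAB _ _ (hidxinj i j hij)
                  (show G.Adj (vA (idx i)) (vB (idx j)) by simpa [hemb] using h)
            · constructor
              · rintro ⟨rfl, -⟩
                simpa [hemb] using (hvAB (idx i)).symm
              · intro h
                refine ⟨?_, by decide⟩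
                by_contra hij
                exact hnoAB _ _ (hidxinj j i (Ne.symm hij))
                  ((show G.Adj (vB (idx i)) (vA (idx j)) by simpa [hemb] using h).symm)
            · constructor
              · rintro ⟨-, h⟩; exact absurd rfl h
              · intro h
                exact absurd (show G.Adj (vB (idx i)) (vB (idx j)) by
                  simpa [hemb] using h) (hnoBB _ _)
          have hembinj : Function.Injective emb := by
            rintro ⟨i, a⟩ ⟨j, b⟩ h
            have ha : a = 0 ∨ a = 1 := by omega
            have hb : b = 0 ∨ b = 1 := by omega
            rcases ha with rfl | rfl <;> rcases hb with rfl | rfl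
            · have h' : vA (idx i) = vA (idx j) := by simpa [hemb] using h
              by_cases hij : i = j
              · rw [hij]
              · exact absurd h' (hvne _ _ (hidxinj i j hij)).1
            · have h' : vA (idx i) = vB (idx j) := by simpa [hemb] using h
              by_cases hij : i = j
              · exact absurd h' (by rw [hij]; exact (hvAB (idx j)).ne)
              · exact absurd h' (hvne _ _ (hidxinj i j hij)).2.1
            · have h' : vB (idx i) = vA (idx j) := by simpa [hemb] using h
              by_cases hij : i = j
              · exact absurd h'.symm (by rw [hij]; exact (hvAB (idx j)).ne)
              · exact absurd h' (hvne _ _ (hidxinj i j hij)).2.2.1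
            · have h' : vB (idx i) = vB (idx j) := by simpa [hemb] using h
              by_cases hij : i = j
              · rw [hij]
              · exact absurd h' (hvne _ _ (hidxinj i j hij)).2.2.2
          have hCG' : C (2 * n1) G' :=
            hher G G' hG ⟨⟨fun x => emb (ι x), fun x y hxy => ι.injective (hembinj hxy)⟩,
              fun x y => hkey (ι x) (ι y)⟩
          exact (hm1 G' hCG').false ⟨ι, fun {a b} => Iff.rfl⟩
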